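/- Any finite graph that admits a proper coloring with a color classes of size exactly 1 and b color classes of size at least 2 can be realized as a unit distance graph in R^{a+2b}. -/

import Mathlib

/-- any finite graph admitting a proper coloring with `a` color classes of
size exactly `1` and `b` color classes of size at least `2` can be realized as a unit
distance graph in `ℝ^{a+2b}`. -/
theorem stmt_17 (a b : ℕ) (V : Type) [Fintype V] (G : SimpleGraph V)
    (C : V → Fin (a + b))
    (hproper : ∀ u v, G.Adj u v → C u ≠ C v)
    (hsingle : ∀ i : Fin (a + b), i.val < a → Nat.card {v : V // C v = i} = 1)
    (hbig : ∀ i : Fin (a + b), a ≤ i.val → 2 ≤ Nat.card {v : V // C v = i}) :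
    ∃ f : V → EuclideanSpace ℝ (Fin (a + 2 * b)), Function.Injective f ∧
      ∀ u v, G.Adj u v → dist (f u) (f v) = 1 := by
  classical
  set n := a + 2 * b with hn
  -- an injection of vertices into ℝ
  let g : V → ℝ := fun v => ((Fintype.equivFin V v : ℕ) : ℝ)
  have hg : Function.Injective g := by
    intro u v h
    have h' : ((Fintype.equivFin V u : ℕ) : ℝ) = ((Fintype.equivFin V v : ℕ) : ℝ) := h
    exact (Fintype.equivFin V).injective (Fin.ext (Nat.cast_injective h'))
  let c : ℝ := (Real.sqrt 2)⁻¹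
  have hcpos : 0 < c := by positivity
  have hc2 : c ^ 2 = 1 / 2 := by
    simp only [c, inv_pow]
    rw [Real.sq_sqrt (by norm_num : (0:ℝ) ≤ 2)]
    norm_num
  let θ : V → ℝ := fun v => Real.arctan (g v)
  have hcos : ∀ v, 0 < Real.cos (θ v) := fun v => Real.cos_arctan_pos _
  -- start of the coordinate block for each color
  let K : Fin (a + b) → ℕ := fun i => a + 2 * (i.val - a)
  have hKlt : ∀ i : Fin (a + b), ¬ i.val < a → K i + 1 < n := by
    intro i hi
    have hib := i.isLt
    simp only [K, hn]
    omega
  let f : V → EuclideanSpace ℝ (Fin n) := fun v => WithLp.toLp 2 fun (j : Fin n) =>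
    if (C v).val < a then (if j.val = (C v).val then c else 0)
    else if j.val = K (C v) then c * Real.cos (θ v)
    else if j.val = K (C v) + 1 then c * Real.sin (θ v) else 0
  -- support is contained in the block
  have hsupp : ∀ v (j : Fin n), f v j ≠ 0 →
      (if (C v).val < a then j.val = (C v).val
        else j.val = K (C v) ∨ j.val = K (C v) + 1) := by
    intro v j hj
    by_cases h : (C v).val < a
    · simp only [h, if_true] at hj ⊢
      by_contra hne
      simp only [f, h, if_true, hne, if_false] at hj
      exact hj rfl
    · simp only [h, if_false] at hj ⊢
      by_contra hne
      push_neg at hne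
      simp only [f, h, if_false, hne.1, hne.2] at hj
      exact hj rfl
  -- blocks of distinct colors are disjoint
  have hdisj : ∀ (i i' : Fin (a + b)) (j : ℕ),
      (if i.val < a then j = i.val else j = K i ∨ j = K i + 1) →
      (if i'.val < a then j = i'.val else j = K i' ∨ j = K i' + 1) → i = i' := by
    intro i i' j h1 h2
    have hib := i.isLt
    have hib' := i'.isLt
    apply Fin.ext
    by_cases hi : i.val < a <;> by_cases hi' : i'.val < a <;>
      simp only [hi, hi', if_true, if_false, K] at h1 h2 <;> omega
  have hmul : ∀ u v, C u ≠ C v → ∀ j : Fin n, f u j * f v j = 0 := by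
    intro u v huv j
    by_contra h
    have h1 := hsupp u j (left_ne_zero_of_mul h)
    have h2 := hsupp v j (right_ne_zero_of_mul h)
    exact huv (hdisj _ _ _ h1 h2)
  -- the squared norm of each point is 1/2
  have hsum : ∀ v, ∑ j : Fin n, (f v j) ^ 2 = 1 / 2 := by
    intro v
    by_cases h : (C v).val < a
    · have hlt : (C v).val < n := by
        have := (C v).isLt; omega
      rw [Finset.sum_eq_single (⟨(C v).val, hlt⟩ : Fin n)]
      · have hv : f v ⟨(C v).val, hlt⟩ = c := by simp [f, h]
        rw [hv, hc2]
      · intro j _ hj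
        have hne : j.val ≠ (C v).val := fun hh => hj (Fin.ext hh)
        simp only [f, h, if_true, hne, if_false]
        ring
      · intro hmem; exact absurd (Finset.mem_univ _) hmem
    · have h2 : K (C v) + 1 < n := hKlt (C v) h
      have h1 : K (C v) < n := by omega
      have hne : (⟨K (C v), h1⟩ : Fin n) ≠ ⟨K (C v) + 1, h2⟩ := by
        simp [Fin.ext_iff]
      rw [← Finset.sum_subset
        (Finset.subset_univ {(⟨K (C v), h1⟩ : Fin n), ⟨K (C v) + 1, h2⟩})]
      · rw [Finset.sum_pair hne]
        have e1 : f v ⟨K (C v), h1⟩ = c * Real.cos (θ v) := by simp [f, h]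
        have e2 : f v ⟨K (C v) + 1, h2⟩ = c * Real.sin (θ v) := by simp [f, h]
        rw [e1, e2]
        have := Real.sin_sq_add_cos_sq (θ v)
        nlinarith [hc2]
      · intro j _ hj
        simp only [Finset.mem_insert, Finset.mem_singleton] at hj
        push_neg at hj
        have e1 : j.val ≠ K (C v) := fun hh => hj.1 (Fin.ext hh)
        have e2 : j.val ≠ K (C v) + 1 := fun hh => hj.2 (Fin.ext hh)
        simp only [f, h, if_false, e1, e2]
        ring
  -- distance between distinct color classes is 1
  have hdist : ∀ u v, C u ≠ C v → dist (f u) (f v) = 1 := by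
    intro u v huv
    rw [EuclideanSpace.dist_eq]
    have hpt : ∀ j : Fin n, dist (f u j) (f v j) ^ 2 = (f u j) ^ 2 + (f v j) ^ 2 := by
      intro j
      rw [Real.dist_eq, sq_abs]
      have := hmul u v huv j
      nlinarith [this]
    rw [Finset.sum_congr rfl (fun j _ => hpt j), Finset.sum_add_distrib, hsum, hsum]
    norm_num
  -- injectivity
  have hinj : Function.Injective f := by
    intro u v huv
    have hC : C u = C v := by
      by_contra hne
      by_cases h : (C v).val < a
      · have hlt : (C v).val < n := by
          have := (C v).isLt; omega
        have hv : f v ⟨(C v).val, hlt⟩ = c := by simp [f, h]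
        have hu : f u ⟨(C v).val, hlt⟩ = 0 := by
          by_contra h0
          exact hne (hdisj _ _ _ (hsupp u _ h0) (by simp [h]))
        have heq : f u ⟨(C v).val, hlt⟩ = f v ⟨(C v).val, hlt⟩ := congrFun (congrArg WithLp.ofLp huv) _
        rw [hu, hv] at heq
        exact absurd heq.symm (ne_of_gt hcpos)
      · have h2 : K (C v) + 1 < n := hKlt (C v) h
        have h1 : K (C v) < n := by omega
        have hv : f v ⟨K (C v), h1⟩ = c * Real.cos (θ v) := by simp [f, h]
        have hu : f u ⟨K (C v), h1⟩ = 0 := by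
          by_contra h0
          refine hne (hdisj _ _ _ (hsupp u _ h0) ?_)
          simp [h]
        have heq : f u ⟨K (C v), h1⟩ = f v ⟨K (C v), h1⟩ := congrFun (congrArg WithLp.ofLp huv) _
        rw [hu, hv] at heq
        nlinarith [mul_pos hcpos (hcos v)]
    by_cases h : (C u).val < a
    · have h1 := hsingle (C u) h
      rw [Nat.card_eq_one_iff_unique] at h1
      have := h1.1.allEq (⟨u, rfl⟩ : {w : V // C w = C u}) ⟨v, hC.symm⟩
      exact congrArg Subtype.val this
    · have h2 : K (C u) + 1 < n := hKlt (C u) h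
      have h1 : K (C u) < n := by omega
      have hCv : (C v) = (C u) := hC.symm
      have e1u : f u ⟨K (C u), h1⟩ = c * Real.cos (θ u) := by simp [f, h]
      have e1v : f v ⟨K (C u), h1⟩ = c * Real.cos (θ v) := by simp [f, hCv, h]
      have e2u : f u ⟨K (C u) + 1, h2⟩ = c * Real.sin (θ u) := by simp [f, h]
      have e2v : f v ⟨K (C u) + 1, h2⟩ = c * Real.sin (θ v) := by simp [f, hCv, h]
      have hcoseq : Real.cos (θ u) = Real.cos (θ v) := by
        have heq : f u ⟨K (C u), h1⟩ = f v ⟨K (C u), h1⟩ := congrFun (congrArg WithLp.ofLp huv) _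
        rw [e1u, e1v] at heq
        exact mul_left_cancel₀ (ne_of_gt hcpos) heq
      have hsineq : Real.sin (θ u) = Real.sin (θ v) := by
        have heq : f u ⟨K (C u) + 1, h2⟩ = f v ⟨K (C u) + 1, h2⟩ := congrFun (congrArg WithLp.ofLp huv) _
        rw [e2u, e2v] at heq
        exact mul_left_cancel₀ (ne_of_gt hcpos) heq
      have htan : Real.tan (θ u) = Real.tan (θ v) := by
        rw [Real.tan_eq_sin_div_cos, Real.tan_eq_sin_div_cos, hcoseq, hsineq]
      have hguv : g u = g v := by
        simpa only [θ, Real.tan_arctan] using htan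
      exact hg hguv
  exact ⟨f, hinj, fun u v h => hdist u v (hproper u v h)⟩
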